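/- Let m ≥ 2 and k ≥ 1 be integers, let u > 0, and let s_1, …, s_k be nonnegative reals such that s_k > 0 and, for every j ∈ {1, …, k}, either s_j = 0 or 2^{j−1} u ≤ s_j < 2m · 2^{j} u. Then the entropy of the family of nonzero entries of (s_1, …, s_k) satisfies Ent((s_j)_{j : s_j > 0}) ≤ 3 ln(2m). -/

import Mathlib

open Finset Real
open scoped Classical

/-- Entropy-like function `Ent(a_S) = -∑_{i∈S} (a_i/A) ln (a_i/A)` with `A = ∑_{j∈S} a_j`. -/
noncomputable def ent {ι : Type*} (S : Finset ι) (a : ι → ℝ) : ℝ :=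
  -∑ i ∈ S, (a i / ∑ j ∈ S, a j) * Real.log (a i / ∑ j ∈ S, a j)

lemma my_sqrt_pow (x : ℝ) (hx : 0 ≤ x) (n : ℕ) :
    Real.sqrt (x ^ n) = Real.sqrt x ^ n := by
  induction n with
  | zero => simp
  | succ n ih => rw [pow_succ, pow_succ, Real.sqrt_mul (pow_nonneg hx n), ih]

lemma my_aux1 (y : ℝ) (hy : 0 < y) :
    -(y * Real.log y) ≤ 4 / (3 * Real.exp 1) * Real.sqrt (Real.sqrt y) := by
  set t := Real.sqrt (Real.sqrt y) with ht_def
  have ht : 0 < t := Real.sqrt_pos.2 (Real.sqrt_pos.2 hy)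
  have he : (0:ℝ) < Real.exp 1 := Real.exp_pos 1
  have hy4 : y = t ^ 4 := by
    rw [ht_def, show (4:ℕ) = 2*2 from rfl, pow_mul, Real.sq_sqrt (Real.sqrt_nonneg y),
      Real.sq_sqrt hy.le]
  have h1 : Real.log (1 / (Real.exp 1 * t ^ 3)) ≤ 1 / (Real.exp 1 * t ^ 3) - 1 :=
    Real.log_le_sub_one_of_pos (by positivity)
  have h2 : Real.log (1 / (Real.exp 1 * t ^ 3)) = -(1 + 3 * Real.log t) := by
    rw [one_div, Real.log_inv, Real.log_mul he.ne' (by positivity), Real.log_exp,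
      Real.log_pow]
    push_cast
    ring
  have h3 : -(3 * Real.log t) ≤ 1 / (Real.exp 1 * t ^ 3) := by
    rw [h2] at h1; linarith
  have h4 : -(3 * Real.log t) * (Real.exp 1 * t ^ 3) ≤ 1 := by
    rw [le_div_iff₀ (by positivity)] at h3
    linarith
  rw [hy4, Real.log_pow, div_mul_eq_mul_div, le_div_iff₀ (by positivity)]
  push_cast
  nlinarith [mul_le_mul_of_nonneg_left h4 (show (0:ℝ) ≤ 4*t by positivity)]

lemma my_aux2 (p B : ℝ) (hp : 0 < p) (hB : 0 < B) :
    B * -(p * Real.log p) ≤ B * (p * Real.log B)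
      + 4 / (3 * Real.exp 1) * (Real.sqrt (Real.sqrt B) * Real.sqrt (Real.sqrt p)) := by
  have h := my_aux1 (B * p) (by positivity)
  rw [Real.log_mul hB.ne' hp.ne', Real.sqrt_mul hB.le,
    Real.sqrt_mul (Real.sqrt_nonneg B)] at h
  nlinarith [h]

set_option maxHeartbeats 800000 in
theorem stmt_2 (m k : ℕ) (hm : 2 ≤ m) (hk : 1 ≤ k) (u : ℝ) (hu : 0 < u)
    (s : ℕ → ℝ) (hnn : ∀ j ∈ Finset.Icc 1 k, 0 ≤ s j) (hsk : 0 < s k)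
    (hs : ∀ j ∈ Finset.Icc 1 k,
      s j = 0 ∨ ((2 : ℝ) ^ (j - 1) * u ≤ s j ∧ s j < 2 * m * 2 ^ j * u)) :
    ent ((Finset.Icc 1 k).filter fun j => 0 < s j) s ≤ 3 * Real.log (2 * m) := by
  have hm' : (4:ℝ) ≤ 2 * (m:ℝ) := by
    have : (2:ℝ) ≤ (m:ℝ) := by exact_mod_cast hm
    linarith
  set M : ℝ := 2 * (m:ℝ) with hM_def
  set S : Finset ℕ := (Finset.Icc 1 k).filter (fun j => 0 < s j) with hS_def
  set A : ℝ := ∑ j ∈ S, s j with hA_def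
  have hkI : k ∈ Finset.Icc 1 k := Finset.mem_Icc.2 ⟨hk, le_refl k⟩
  have hkS : k ∈ S := Finset.mem_filter.2 ⟨hkI, hsk⟩
  have hSpos : ∀ j ∈ S, 0 < s j := fun j hj => (Finset.mem_filter.1 hj).2
  have hskl : (2:ℝ) ^ (k-1) * u ≤ s k := by
    rcases hs k hkI with h | h
    · exact absurd h hsk.ne'
    · exact h.1
  have hAk : s k ≤ A := Finset.single_le_sum (fun j hj => (hSpos j hj).le) hkS
  have hAl : (2:ℝ) ^ (k-1) * u ≤ A := le_trans hskl hAk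
  have hApos : 0 < A := lt_of_lt_of_le (by positivity) hAl
  have h2k : (2:ℝ) ^ (k-1) * 2 = 2 ^ k := by
    rw [← pow_succ, Nat.sub_add_cancel hk]
  -- upper bound on each p_j = s j / A
  have hub : ∀ j ∈ S, s j / A ≤ 2 * M * 2 ^ j / 2 ^ k := by
    intro j hj
    have hjI : j ∈ Finset.Icc 1 k := (Finset.mem_filter.1 hj).1
    have hsj : s j < 2 * (m:ℝ) * 2 ^ j * u := by
      rcases hs j hjI with h | h
      · exact absurd h (hSpos j hj).ne'
      · exact h.2
    have h1 : s j / A ≤ (2 * (m:ℝ) * 2 ^ j * u) / ((2:ℝ) ^ (k-1) * u) :=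
      div_le_div₀ (by positivity) hsj.le (by positivity) hAl
    refine h1.trans (le_of_eq ?_)
    rw [div_eq_div_iff (by positivity) (by positivity : ((2:ℝ)^k) ≠ 0), ← h2k, hM_def]
    ring
  -- sum of p_j is 1
  have hsum1 : ∑ j ∈ S, s j / A = 1 := by
    rw [← Finset.sum_div, ← hA_def, div_self hApos.ne']
  -- numeric constants
  set r : ℝ := Real.sqrt (Real.sqrt 2) with hr_def
  have hs2l : (1.41:ℝ) ≤ Real.sqrt 2 := by
    nlinarith [Real.sq_sqrt (show (0:ℝ) ≤ 2 by norm_num), Real.sqrt_nonneg 2]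
  have hs2u : Real.sqrt 2 ≤ 1.415 := by
    nlinarith [Real.sq_sqrt (show (0:ℝ) ≤ 2 by norm_num), Real.sqrt_nonneg 2]
  have hr1 : (1.18:ℝ) ≤ r := by
    rw [hr_def]
    rw [Real.le_sqrt (by norm_num) (Real.sqrt_nonneg 2)]
    nlinarith
  have hrpos : (0:ℝ) < r := by linarith
  have hr2 : r ^ 2 = Real.sqrt 2 := Real.sq_sqrt (Real.sqrt_nonneg 2)
  have hrne1 : r ≠ 1 := by intro h; rw [h] at hr1; norm_num at hr1
  have hrm1 : (0.18:ℝ) ≤ r - 1 := by linarith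
  have hqpow : ∀ n : ℕ, Real.sqrt (Real.sqrt ((2:ℝ) ^ n)) = r ^ n := by
    intro n
    rw [my_sqrt_pow 2 (by norm_num) n, my_sqrt_pow (Real.sqrt 2) (Real.sqrt_nonneg 2) n,
      hr_def]
  -- bound on sum of fourth roots
  have hQ : ∑ j ∈ S, Real.sqrt (Real.sqrt (s j / A))
      ≤ Real.sqrt (Real.sqrt (2 * M)) * r / (r - 1) := by
    have step1 : ∑ j ∈ S, Real.sqrt (Real.sqrt (s j / A))
        ≤ ∑ j ∈ S, (Real.sqrt (Real.sqrt (2 * M)) / r ^ k) * r ^ j := by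
      refine Finset.sum_le_sum fun j hj => ?_
      have h1 : Real.sqrt (Real.sqrt (s j / A))
          ≤ Real.sqrt (Real.sqrt (2 * M * 2 ^ j / 2 ^ k)) :=
        Real.sqrt_le_sqrt (Real.sqrt_le_sqrt (hub j hj))
      refine h1.trans (le_of_eq ?_)
      rw [Real.sqrt_div (by positivity) _, Real.sqrt_div (Real.sqrt_nonneg _) _,
        Real.sqrt_mul (by positivity : (0:ℝ) ≤ 2 * M) ((2:ℝ) ^ j),
        Real.sqrt_mul (Real.sqrt_nonneg (2 * M)) _, hqpow j, hqpow k]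
      ring
    have step2 : ∑ j ∈ S, (Real.sqrt (Real.sqrt (2 * M)) / r ^ k) * r ^ j
        = (Real.sqrt (Real.sqrt (2 * M)) / r ^ k) * ∑ j ∈ S, r ^ j := by
      rw [Finset.mul_sum]
    have step3 : ∑ j ∈ S, r ^ j ≤ r ^ (k+1) / (r - 1) := by
      have hsub : S ⊆ Finset.range (k+1) := by
        intro j hj
        have := (Finset.mem_Icc.1 (Finset.mem_filter.1 hj).1).2
        exact Finset.mem_range.2 (Nat.lt_succ_of_le this)
      have h1 : ∑ j ∈ S, r ^ j ≤ ∑ j ∈ Finset.range (k+1), r ^ j :=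
        Finset.sum_le_sum_of_subset_of_nonneg hsub
          (fun i _ _ => pow_nonneg hrpos.le i)
      have h2 : ∑ j ∈ Finset.range (k+1), r ^ j = (r ^ (k+1) - 1) / (r - 1) :=
        geom_sum_eq hrne1 (k+1)
      have h3 : (r ^ (k+1) - 1) / (r - 1) ≤ r ^ (k+1) / (r - 1) := by
        apply div_le_div_of_nonneg_right ?_ (by linarith)
        · linarith
      calc ∑ j ∈ S, r ^ j ≤ (r ^ (k+1) - 1) / (r - 1) := by rw [← h2]; exact h1
        _ ≤ r ^ (k+1) / (r - 1) := h3
    have hq2M : (0:ℝ) ≤ Real.sqrt (Real.sqrt (2 * M)) := Real.sqrt_nonneg _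
    calc ∑ j ∈ S, Real.sqrt (Real.sqrt (s j / A))
        ≤ (Real.sqrt (Real.sqrt (2 * M)) / r ^ k) * ∑ j ∈ S, r ^ j := by
          rw [← step2]; exact step1
      _ ≤ (Real.sqrt (Real.sqrt (2 * M)) / r ^ k) * (r ^ (k+1) / (r - 1)) := by
          apply mul_le_mul_of_nonneg_left step3 (by positivity)
      _ = Real.sqrt (Real.sqrt (2 * M)) * r / (r - 1) := by
          rw [pow_succ]
          field_simp
  clear_value M S A
  -- main estimate
  have hMpos : (0:ℝ) < M := by linarith
  have hB : (0:ℝ) < M ^ 2 := by positivity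
  rw [← mul_le_mul_iff_right₀ hB]
  have hent : ent S s = ∑ j ∈ S, -(s j / A * Real.log (s j / A)) := by
    rw [ent, ← Finset.sum_neg_distrib, ← hA_def]
  rw [hent, Finset.mul_sum]
  have hptwise : ∀ j ∈ S, M ^ 2 * -(s j / A * Real.log (s j / A))
      ≤ M ^ 2 * (s j / A * Real.log (M ^ 2))
        + 4 / (3 * Real.exp 1) * (Real.sqrt (Real.sqrt (M ^ 2)) * Real.sqrt (Real.sqrt (s j / A))) :=
    fun j hj => my_aux2 _ _ (div_pos (hSpos j hj) hApos) hB
  calc ∑ j ∈ S, M ^ 2 * -(s j / A * Real.log (s j / A))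
      ≤ ∑ j ∈ S, (M ^ 2 * (s j / A * Real.log (M ^ 2))
          + 4 / (3 * Real.exp 1) * (Real.sqrt (Real.sqrt (M ^ 2)) * Real.sqrt (Real.sqrt (s j / A)))) :=
        Finset.sum_le_sum hptwise
    _ = M ^ 2 * Real.log (M ^ 2) * (∑ j ∈ S, s j / A)
        + 4 / (3 * Real.exp 1) * Real.sqrt (Real.sqrt (M ^ 2)) * (∑ j ∈ S, Real.sqrt (Real.sqrt (s j / A))) := by
        rw [Finset.sum_add_distrib, Finset.mul_sum, Finset.mul_sum]
        congr 1
        · apply Finset.sum_congr rfl; intro j hj; ring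
        · apply Finset.sum_congr rfl; intro j hj; ring
    _ ≤ M ^ 2 * Real.log (M ^ 2) * 1
        + 4 / (3 * Real.exp 1) * Real.sqrt (Real.sqrt (M ^ 2)) * (Real.sqrt (Real.sqrt (2 * M)) * r / (r - 1)) := by
        rw [hsum1]
        have hc : (0:ℝ) ≤ 4 / (3 * Real.exp 1) * Real.sqrt (Real.sqrt (M ^ 2)) := by positivity
        have := mul_le_mul_of_nonneg_left hQ hc
        linarith
    _ ≤ M ^ 2 * (3 * Real.log M) := by
        -- final numeric step
        have hqB : Real.sqrt (Real.sqrt (M ^ 2)) = Real.sqrt M := by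
          rw [Real.sqrt_sq hMpos.le]
        have hq2M : Real.sqrt (Real.sqrt (2 * M)) = r * Real.sqrt (Real.sqrt M) := by
          rw [Real.sqrt_mul (by norm_num : (0:ℝ) ≤ 2) M,
            Real.sqrt_mul (Real.sqrt_nonneg 2), hr_def]
        have hsM : Real.sqrt M ^ 2 = M := Real.sq_sqrt hMpos.le
        have hsMnn : (0:ℝ) ≤ Real.sqrt M := Real.sqrt_nonneg M
        have hsM2 : (2:ℝ) ≤ Real.sqrt M := by
          nlinarith [hsM, hsMnn, hm']
        have hqM : Real.sqrt (Real.sqrt M) ≤ Real.sqrt M := by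
          have h1 : Real.sqrt M ≤ Real.sqrt M ^ 2 := by nlinarith [hsM2]
          calc Real.sqrt (Real.sqrt M) ≤ Real.sqrt (Real.sqrt M ^ 2) := Real.sqrt_le_sqrt h1
            _ = Real.sqrt M := Real.sqrt_sq hsMnn
        have hqMnn : (0:ℝ) ≤ Real.sqrt (Real.sqrt M) := Real.sqrt_nonneg _
        have hlog2 : Real.log (M ^ 2) = 2 * Real.log M := by
          rw [Real.log_pow]; push_cast; ring
        have hlogM : (1.386:ℝ) ≤ Real.log M := by
          have h4 : Real.log 4 ≤ Real.log M := Real.log_le_log (by norm_num) hm'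
          have : Real.log 4 = 2 * Real.log 2 := by
            rw [show (4:ℝ) = 2 ^ 2 by norm_num, Real.log_pow]; push_cast; ring
          have hl2 := Real.log_two_gt_d9
          rw [this] at h4
          linarith
        have he : (2.7:ℝ) ≤ Real.exp 1 := by
          have := Real.exp_one_gt_d9; linarith
        have hepos : (0:ℝ) < Real.exp 1 := Real.exp_pos 1
        have hc : 4 / (3 * Real.exp 1) ≤ 1/2 := by
          rw [div_le_iff₀ (by positivity)]
          linarith
        have hcpos : (0:ℝ) < 4 / (3 * Real.exp 1) := by positivity
        rw [hqB, hq2M, hlog2, mul_one]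
        -- goal: M^2*(2*log M) + c*√M*(r*q M*r/(r-1)) ≤ M^2*(3*log M)
        rw [show 4 / (3 * Real.exp 1) * Real.sqrt M * (r * Real.sqrt (Real.sqrt M) * r / (r - 1))
            = (4 / (3 * Real.exp 1) * Real.sqrt M * Real.sqrt (Real.sqrt M) * r ^ 2) / (r - 1) by ring]
        have hr2u : r ^ 2 ≤ 1.415 := by rw [hr2]; exact hs2u
        have hkey : (4 / (3 * Real.exp 1) * Real.sqrt M * Real.sqrt (Real.sqrt M) * r ^ 2) / (r - 1)
            ≤ M ^ 2 * Real.log M := by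
          rw [div_le_iff₀ (by linarith : (0:ℝ) < r - 1)]
          have t1 : 4 / (3 * Real.exp 1) * Real.sqrt M * Real.sqrt (Real.sqrt M) * r ^ 2
              ≤ 1/2 * Real.sqrt M * Real.sqrt M * 1.415 := by
            gcongr
          have t1' : 1/2 * Real.sqrt M * Real.sqrt M * 1.415 = 0.7075 * M := by
            linear_combination 0.7075 * hsM
          have p1 : 4*M ≤ M^2 := by nlinarith
          have p2 : (4*M)*1.386 ≤ M^2 * Real.log M :=
            mul_le_mul p1 hlogM (by norm_num) (by positivity)
          have p3 : ((4*M)*1.386)*0.18 ≤ (M^2*Real.log M)*(r-1) :=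
            mul_le_mul p2 hrm1 (by norm_num) (by nlinarith)
          linarith [t1, t1', p3, hMpos]
        linarith [hkey]
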